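/- arXiv:1512.06607 — 2 statements merged into one kernel-verified Lean document; each statement's English description precedes it below -/
import Mathlib

section
/- Let (X, μ) be a measure space, d ≥ 1 an integer, ε > 0 and M ≥ 0. Let ℓ : X → ℝ be measurable with 0 ≤ ℓ(x) ≤ M for μ-a.e. x, and let u, v : X → ℝ^d be measurable functions with ∫_X |u(x) − v(x)|² dμ < ∞. Then (∫_X |ℓ(x) h_ε(u(x)) − ℓ(x) h_ε(v(x))|² dμ)^{1/2} ≤ (2M/ε) (∫_X |u(x) − v(x)|² dμ)^{1/2}, where h_ε(w) = w/√(ε² + |w|²). -/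
open MeasureTheory

lemma h_eps_lip {E : Type*} [NormedAddCommGroup E] [NormedSpace ℝ E]
    (ε : ℝ) (hε : 0 < ε) (a b : E) :
    ‖(Real.sqrt (ε ^ 2 + ‖a‖ ^ 2))⁻¹ • a - (Real.sqrt (ε ^ 2 + ‖b‖ ^ 2))⁻¹ • b‖
      ≤ (2 / ε) * ‖a - b‖ := by
  set sa := Real.sqrt (ε ^ 2 + ‖a‖ ^ 2) with hsa
  set sb := Real.sqrt (ε ^ 2 + ‖b‖ ^ 2) with hsb
  have hsa2 : sa ^ 2 = ε ^ 2 + ‖a‖ ^ 2 := Real.sq_sqrt (by positivity)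
  have hsb2 : sb ^ 2 = ε ^ 2 + ‖b‖ ^ 2 := Real.sq_sqrt (by positivity)
  have hsa0 : 0 ≤ sa := Real.sqrt_nonneg _
  have hsb0 : 0 ≤ sb := Real.sqrt_nonneg _
  have hsaε : ε ≤ sa := by nlinarith [norm_nonneg a]
  have hsbε : ε ≤ sb := by nlinarith [norm_nonneg b]
  have hsaa : ‖a‖ ≤ sa := by nlinarith
  have hsbb : ‖b‖ ≤ sb := by nlinarith
  have hsapos : 0 < sa := lt_of_lt_of_le hε hsaε
  have hsbpos : 0 < sb := lt_of_lt_of_le hε hsbε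
  have hnab : |‖a‖ - ‖b‖| ≤ ‖a - b‖ := abs_norm_sub_norm_le a b
  have hlip : |sa - sb| ≤ ‖a - b‖ := by
    have habs := abs_le.mp hnab
    have hprod : (sa - sb) * (sa + sb) = (‖a‖ - ‖b‖) * (‖a‖ + ‖b‖) := by nlinarith
    rw [abs_le]
    constructor
    · nlinarith [habs.1, habs.2, norm_nonneg a, norm_nonneg b, norm_nonneg (a - b)]
    · nlinarith [habs.1, habs.2, norm_nonneg a, norm_nonneg b, norm_nonneg (a - b)]
  have key : sa⁻¹ • a - sb⁻¹ • b = sa⁻¹ • (a - b) + (sa⁻¹ - sb⁻¹) • b := by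
    rw [smul_sub, sub_smul]; abel
  rw [key]
  have h1 : ‖sa⁻¹ • (a - b)‖ ≤ ε⁻¹ * ‖a - b‖ := by
    rw [norm_smul, Real.norm_eq_abs, abs_of_pos (inv_pos.mpr hsapos)]
    exact mul_le_mul_of_nonneg_right (inv_anti₀ hε hsaε) (norm_nonneg _)
  have h2 : ‖(sa⁻¹ - sb⁻¹) • b‖ ≤ ε⁻¹ * ‖a - b‖ := by
    rw [norm_smul, Real.norm_eq_abs]
    have he : sa⁻¹ - sb⁻¹ = (sb - sa) / (sa * sb) := by field_simp
    have e1 : |sa⁻¹ - sb⁻¹| = |sb - sa| / (sa * sb) := by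
      rw [he, abs_div, abs_of_pos (mul_pos hsapos hsbpos)]
    have hba : |sb - sa| ≤ ‖a - b‖ := by rwa [abs_sub_comm]
    calc |sa⁻¹ - sb⁻¹| * ‖b‖ ≤ (‖a - b‖ / (sa * sb)) * sb := by
          rw [e1]; gcongr
      _ = ‖a - b‖ / sa := by
          field_simp
      _ ≤ ε⁻¹ * ‖a - b‖ := by
          rw [div_eq_mul_inv, mul_comm]
          exact mul_le_mul_of_nonneg_right (inv_anti₀ hε hsaε) (norm_nonneg _)
  calc ‖sa⁻¹ • (a - b) + (sa⁻¹ - sb⁻¹) • b‖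
      ≤ ‖sa⁻¹ • (a - b)‖ + ‖(sa⁻¹ - sb⁻¹) • b‖ := norm_add_le _ _
    _ ≤ ε⁻¹ * ‖a - b‖ + ε⁻¹ * ‖a - b‖ := add_le_add h1 h2
    _ = (2 / ε) * ‖a - b‖ := by ring

/-- Lipschitz continuity of `Ψ'_ε` in L²: if `0 ≤ ℓ ≤ M` a.e., then
`‖ℓ·(h_ε∘u) − ℓ·(h_ε∘v)‖_{L²} ≤ (2M/ε) ‖u − v‖_{L²}`, where
`h_ε(w) = w / √(ε² + |w|²)`. -/
theorem stmt_10 {X : Type*} [MeasurableSpace X] (μ : Measure X)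
    (d : ℕ) (hd : 1 ≤ d) (ε : ℝ) (hε : 0 < ε) (M : ℝ) (hM : 0 ≤ M)
    (ℓ : X → ℝ) (hℓmeas : Measurable ℓ)
    (hℓ : ∀ᵐ x ∂μ, 0 ≤ ℓ x ∧ ℓ x ≤ M)
    (u v : X → EuclideanSpace ℝ (Fin d)) (hu : Measurable u) (hv : Measurable v)
    (huv : Integrable (fun x => ‖u x - v x‖ ^ 2) μ) :
    Real.sqrt (∫ x, ‖ℓ x • ((Real.sqrt (ε ^ 2 + ‖u x‖ ^ 2))⁻¹ • u x)
        - ℓ x • ((Real.sqrt (ε ^ 2 + ‖v x‖ ^ 2))⁻¹ • v x)‖ ^ 2 ∂μ) ≤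
      (2 * M / ε) * Real.sqrt (∫ x, ‖u x - v x‖ ^ 2 ∂μ) := by
  set f := fun x => ‖ℓ x • ((Real.sqrt (ε ^ 2 + ‖u x‖ ^ 2))⁻¹ • u x)
        - ℓ x • ((Real.sqrt (ε ^ 2 + ‖v x‖ ^ 2))⁻¹ • v x)‖ ^ 2 with hf
  have hc : 0 ≤ 2 * M / ε := by positivity
  have hbound : ∀ᵐ x ∂μ, f x ≤ (2 * M / ε) ^ 2 * ‖u x - v x‖ ^ 2 := by
    filter_upwards [hℓ] with x ⟨h0, hMx⟩
    have hnorm : ‖ℓ x • ((Real.sqrt (ε ^ 2 + ‖u x‖ ^ 2))⁻¹ • u x)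
        - ℓ x • ((Real.sqrt (ε ^ 2 + ‖v x‖ ^ 2))⁻¹ • v x)‖
        ≤ (2 * M / ε) * ‖u x - v x‖ := by
      rw [← smul_sub, norm_smul, Real.norm_eq_abs, abs_of_nonneg h0]
      calc ℓ x * ‖_ - _‖ ≤ M * ((2 / ε) * ‖u x - v x‖) := by
            exact mul_le_mul hMx (h_eps_lip ε hε (u x) (v x)) (norm_nonneg _)
              hM
        _ = (2 * M / ε) * ‖u x - v x‖ := by ring
    have := sq_le_sq' (by linarith [norm_nonneg (ℓ x • ((Real.sqrt (ε ^ 2 + ‖u x‖ ^ 2))⁻¹ • u x)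
        - ℓ x • ((Real.sqrt (ε ^ 2 + ‖v x‖ ^ 2))⁻¹ • v x)), mul_nonneg hc (norm_nonneg (u x - v x))]) hnorm
    simpa [hf, mul_pow] using this
  have hint : ∫ x, f x ∂μ ≤ (2 * M / ε) ^ 2 * ∫ x, ‖u x - v x‖ ^ 2 ∂μ := by
    rw [← integral_const_mul]
    refine integral_mono_of_nonneg ?_ (huv.const_mul _) hbound
    filter_upwards with x
    positivity
  calc Real.sqrt (∫ x, f x ∂μ)
      ≤ Real.sqrt ((2 * M / ε) ^ 2 * ∫ x, ‖u x - v x‖ ^ 2 ∂μ) := Real.sqrt_le_sqrt hint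
    _ = (2 * M / ε) * Real.sqrt (∫ x, ‖u x - v x‖ ^ 2 ∂μ) := by
        rw [Real.sqrt_mul (by positivity), Real.sqrt_sq hc]
end

section
/- Let (X, μ) be a finite measure space, d ≥ 1 an integer, and let ℓ : X → ℝ be measurable, square-integrable and nonnegative μ-a.e. Let (ε_n) be a sequence of positive reals converging to 0, let w : X → ℝ^d and (w_n) be measurable functions with ∫_X |w|² dμ < ∞, ∫_X |w_n|² dμ < ∞ for all n, and ∫_X |w_n − w|² dμ → 0 as n → ∞. Then ∫_X ℓ(x) √(ε_n² + |w_n(x)|²) dμ → ∫_X ℓ(x) |w(x)| dμ as n → ∞. -/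
open MeasureTheory Filter

/-- Auxiliary: product of two a.e. nonnegative L² real functions is integrable. -/
lemma aux_int_mul {X : Type*} [MeasurableSpace X] {μ : Measure X}
    {f g : X → ℝ} (hf : AEStronglyMeasurable f μ) (hg : AEStronglyMeasurable g μ)
    (hf2 : Integrable (fun x => f x ^ 2) μ) (hg2 : Integrable (fun x => g x ^ 2) μ) :
    Integrable (fun x => f x * g x) μ := by
  refine Integrable.mono' ((hf2.add hg2).div_const 2) (hf.mul hg) ?_
  filter_upwards with x
  have := sq_nonneg (|f x| - |g x|)
  have h1 : ‖f x * g x‖ = |f x| * |g x| := by rw [norm_mul]; rfl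
  rw [h1]
  have h2 : |f x| ^ 2 = f x ^ 2 := sq_abs _
  have h3 : |g x| ^ 2 = g x ^ 2 := sq_abs _
  simp only [Pi.add_apply]
  nlinarith [sq_nonneg (|f x| - |g x|), abs_nonneg (f x), abs_nonneg (g x)]

/-- Lemma 8 of the paper: if `ε_n → 0`, `ε_n > 0`, and `w_n → w` in L²(μ; ℝ^d)
for a finite measure μ and a nonnegative square-integrable threshold ℓ, then
`Ψ_{ε_n}(w_n) = ∫ ℓ √(ε_n² + |w_n|²) dμ → Ψ(w) = ∫ ℓ |w| dμ`. -/
theorem stmt_14 {X : Type*} [MeasurableSpace X] (μ : Measure X) [IsFiniteMeasure μ]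
    (d : ℕ) (hd : 1 ≤ d)
    (ℓ : X → ℝ) (hℓmeas : Measurable ℓ) (hℓsq : Integrable (fun x => ℓ x ^ 2) μ)
    (hℓ : ∀ᵐ x ∂μ, 0 ≤ ℓ x)
    (ε : ℕ → ℝ) (hεpos : ∀ n, 0 < ε n) (hεlim : Tendsto ε atTop (nhds 0))
    (w : X → EuclideanSpace ℝ (Fin d)) (hw : Measurable w)
    (hw2 : Integrable (fun x => ‖w x‖ ^ 2) μ)
    (wn : ℕ → X → EuclideanSpace ℝ (Fin d)) (hwn : ∀ n, Measurable (wn n))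
    (hwn2 : ∀ n, Integrable (fun x => ‖wn n x‖ ^ 2) μ)
    (hconv : Tendsto (fun n => ∫ x, ‖wn n x - w x‖ ^ 2 ∂μ) atTop (nhds 0)) :
    Tendsto (fun n => ∫ x, ℓ x * Real.sqrt ((ε n) ^ 2 + ‖wn n x‖ ^ 2) ∂μ) atTop
      (nhds (∫ x, ℓ x * ‖w x‖ ∂μ)) := by
  -- Basic integrability facts
  have hℓL2 : MemLp ℓ 2 μ := (memLp_two_iff_integrable_sq hℓmeas.aestronglyMeasurable).mpr hℓsq
  have hℓint : Integrable ℓ μ := hℓL2.integrable one_le_two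
  have hdiff2 : ∀ n, Integrable (fun x => ‖wn n x - w x‖ ^ 2) μ := by
    intro n
    refine Integrable.mono' (((hwn2 n).add hw2).const_mul 2)
      ((((hwn n).sub hw).norm.pow_const 2).aestronglyMeasurable) ?_
    filter_upwards with x
    have h := norm_sub_le (wn n x) (w x)
    have h2 : ‖‖wn n x - w x‖ ^ 2‖ = ‖wn n x - w x‖ ^ 2 := by
      rw [Real.norm_eq_abs, abs_of_nonneg (by positivity)]
    rw [h2]
    simp only [Pi.add_apply]
    nlinarith [norm_nonneg (wn n x), norm_nonneg (w x), norm_nonneg (wn n x - w x),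
      sq_nonneg (‖wn n x‖ - ‖w x‖), sq_nonneg (‖wn n x‖ + ‖w x‖)]
  have hIw : Integrable (fun x => ℓ x * ‖w x‖) μ :=
    aux_int_mul hℓmeas.aestronglyMeasurable hw.norm.aestronglyMeasurable hℓsq hw2
  have hIdiff : ∀ n, Integrable (fun x => ℓ x * ‖wn n x - w x‖) μ := fun n =>
    aux_int_mul hℓmeas.aestronglyMeasurable ((hwn n).sub hw).norm.aestronglyMeasurable
      hℓsq (hdiff2 n)
  have hIe : ∀ n, Integrable (fun x => ℓ x * Real.sqrt ((ε n) ^ 2 + ‖wn n x‖ ^ 2)) μ := by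
    intro n
    refine Integrable.mono' ((hℓint.const_mul (ε n)).add (hIdiff n |>.add hIw))
      (hℓmeas.aestronglyMeasurable.mul
        ((measurable_const.add ((hwn n).norm.pow_const 2)).sqrt).aestronglyMeasurable) ?_
    filter_upwards [hℓ] with x hx
    have hs1 : Real.sqrt ((ε n) ^ 2 + ‖wn n x‖ ^ 2) ≤ ε n + ‖wn n x‖ := by
      rw [show ε n + ‖wn n x‖ = Real.sqrt ((ε n + ‖wn n x‖) ^ 2) by
        rw [Real.sqrt_sq (add_nonneg (hεpos n).le (norm_nonneg _))]]
      apply Real.sqrt_le_sqrt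
      nlinarith [(hεpos n).le, norm_nonneg (wn n x)]
    have hs0 : 0 ≤ Real.sqrt ((ε n) ^ 2 + ‖wn n x‖ ^ 2) := Real.sqrt_nonneg _
    have hnorm : ‖wn n x‖ ≤ ‖wn n x - w x‖ + ‖w x‖ := by
      calc ‖wn n x‖ = ‖(wn n x - w x) + w x‖ := by rw [sub_add_cancel]
        _ ≤ ‖wn n x - w x‖ + ‖w x‖ := norm_add_le _ _
    have : ‖ℓ x * Real.sqrt ((ε n) ^ 2 + ‖wn n x‖ ^ 2)‖
        = ℓ x * Real.sqrt ((ε n) ^ 2 + ‖wn n x‖ ^ 2) := by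
      rw [Real.norm_eq_abs, abs_of_nonneg (by positivity)]
    rw [this]
    simp only [Pi.add_apply]
    nlinarith [norm_nonneg (wn n x - w x), norm_nonneg (w x)]
  -- The key quantitative bound
  set L := ∫ x, ℓ x ∂μ with hL
  set C := (∫ x, ℓ x ^ 2 ∂μ) ^ ((1:ℝ)/2) with hC
  have key : ∀ n, ‖(∫ x, ℓ x * Real.sqrt ((ε n) ^ 2 + ‖wn n x‖ ^ 2) ∂μ)
      - ∫ x, ℓ x * ‖w x‖ ∂μ‖
      ≤ ε n * L + C * (∫ x, ‖wn n x - w x‖ ^ 2 ∂μ) ^ ((1:ℝ)/2) := by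
    intro n
    rw [← integral_sub (hIe n) hIw]
    calc ‖∫ x, (ℓ x * Real.sqrt ((ε n) ^ 2 + ‖wn n x‖ ^ 2) - ℓ x * ‖w x‖) ∂μ‖
        ≤ ∫ x, ‖ℓ x * Real.sqrt ((ε n) ^ 2 + ‖wn n x‖ ^ 2) - ℓ x * ‖w x‖‖ ∂μ :=
          norm_integral_le_integral_norm _
      _ ≤ ∫ x, (ε n * ℓ x + ℓ x * ‖wn n x - w x‖) ∂μ := by
          refine integral_mono_of_nonneg (Filter.Eventually.of_forall fun x => norm_nonneg _)
            ((hℓint.const_mul (ε n)).add (hIdiff n)) ?_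
          filter_upwards [hℓ] with x hx
          have hs1 : Real.sqrt ((ε n) ^ 2 + ‖wn n x‖ ^ 2) ≤ ε n + ‖wn n x‖ := by
            rw [show ε n + ‖wn n x‖ = Real.sqrt ((ε n + ‖wn n x‖) ^ 2) by
              rw [Real.sqrt_sq (add_nonneg (hεpos n).le (norm_nonneg _))]]
            apply Real.sqrt_le_sqrt
            nlinarith [(hεpos n).le, norm_nonneg (wn n x)]
          have hs2 : ‖wn n x‖ ≤ Real.sqrt ((ε n) ^ 2 + ‖wn n x‖ ^ 2) := by
            have hsq := Real.sq_sqrt (by positivity : (0:ℝ) ≤ (ε n) ^ 2 + ‖wn n x‖ ^ 2)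
            nlinarith [Real.sqrt_nonneg ((ε n) ^ 2 + ‖wn n x‖ ^ 2), norm_nonneg (wn n x),
              sq_nonneg (ε n)]
          have hrev : |‖wn n x‖ - ‖w x‖| ≤ ‖wn n x - w x‖ := abs_norm_sub_norm_le _ _
          have h1 : ‖ℓ x * Real.sqrt ((ε n) ^ 2 + ‖wn n x‖ ^ 2) - ℓ x * ‖w x‖‖
              = ℓ x * |Real.sqrt ((ε n) ^ 2 + ‖wn n x‖ ^ 2) - ‖w x‖| := by
            rw [← mul_sub, Real.norm_eq_abs, abs_mul, abs_of_nonneg hx]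
          rw [h1]
          have h2 : |Real.sqrt ((ε n) ^ 2 + ‖wn n x‖ ^ 2) - ‖w x‖|
              ≤ ε n + ‖wn n x - w x‖ := by
            rw [abs_le]
            constructor
            · nlinarith [le_abs_self (‖wn n x‖ - ‖w x‖), neg_abs_le (‖wn n x‖ - ‖w x‖),
                (hεpos n).le]
            · nlinarith [le_abs_self (‖wn n x‖ - ‖w x‖)]
          nlinarith
      _ = ε n * L + ∫ x, ℓ x * ‖wn n x - w x‖ ∂μ := by
          rw [integral_add (hℓint.const_mul (ε n)) (hIdiff n), integral_const_mul]
      _ ≤ ε n * L + C * (∫ x, ‖wn n x - w x‖ ^ 2 ∂μ) ^ ((1:ℝ)/2) := by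
          gcongr
          have hpq : (2:ℝ).HolderConjugate 2 := Real.HolderConjugate.two_two
          have hdiffL2 : MemLp (fun x => ‖wn n x - w x‖) 2 μ :=
            (memLp_two_iff_integrable_sq
              ((hwn n).sub hw).norm.aestronglyMeasurable).mpr (hdiff2 n)
          have := integral_mul_le_Lp_mul_Lq_of_nonneg hpq hℓ
            (Filter.Eventually.of_forall fun x => norm_nonneg (wn n x - w x))
            (by rw [show ENNReal.ofReal (2:ℝ) = 2 by norm_num]; exact hℓL2)
            (by rw [show ENNReal.ofReal (2:ℝ) = 2 by norm_num]; exact hdiffL2)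
          calc ∫ x, ℓ x * ‖wn n x - w x‖ ∂μ
              ≤ (∫ x, ℓ x ^ (2:ℝ) ∂μ) ^ ((1:ℝ)/2)
                * (∫ x, ‖wn n x - w x‖ ^ (2:ℝ) ∂μ) ^ ((1:ℝ)/2) := this
            _ = C * (∫ x, ‖wn n x - w x‖ ^ 2 ∂μ) ^ ((1:ℝ)/2) := by
                rw [hC]
                congr 2 <;> · apply integral_congr_ae
                              filter_upwards with x
                              rw [show (2:ℝ) = ((2:ℕ):ℝ) by norm_num, Real.rpow_natCast]
  -- Conclude by squeezing
  have hbound : Tendsto (fun n => ε n * L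
      + C * (∫ x, ‖wn n x - w x‖ ^ 2 ∂μ) ^ ((1:ℝ)/2)) atTop (nhds 0) := by
    have h1 : Tendsto (fun n => ε n * L) atTop (nhds 0) := by
      simpa using hεlim.mul_const L
    have h2 : Tendsto (fun n => (∫ x, ‖wn n x - w x‖ ^ 2 ∂μ) ^ ((1:ℝ)/2)) atTop (nhds 0) := by
      have := hconv.rpow_const (p := (1:ℝ)/2) (Or.inr (by norm_num))
      simpa [Real.zero_rpow (by norm_num : (1:ℝ)/2 ≠ 0)] using this
    simpa using h1.add (h2.const_mul C)
  have := squeeze_zero_norm key hbound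
  rwa [← tendsto_sub_nhds_zero_iff]
end
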